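/- Let H be a Hilbert space, D self-adjoint on Dom(D), and W a bounded self-adjoint operator with W² ≥ δ₁·Id for some δ₁ > 0, such that the anticommutator DW + WD extends to a bounded operator of norm at most η. Then for every s ∈ Dom(D), ‖(D + W)s‖² ≥ (δ₁ − η)‖s‖². In particular if η < δ₁ then D + W is bounded below, hence injective with closed range. -/

import Mathlib

/-- If `D` is symmetric, `W` bounded self-adjoint with `W² ≥ δ₁`, and the anticommutator
`DW + WD` is bounded by `η`, then `‖(D+W)s‖² ≥ (δ₁ − η)‖s‖²`; in particular for `η < δ₁`
the operator `D + W` is injective. -/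
theorem stmt9 {H : Type*} [NormedAddCommGroup H] [InnerProductSpace ℂ H] [CompleteSpace H]
    (D : H →ₗ[ℂ] H) (hD : D.IsSymmetric)
    (W : H →L[ℂ] H) (hW : IsSelfAdjoint W)
    (δ₁ η : ℝ) (hδ₁ : 0 < δ₁) (hη : 0 ≤ η)
    (hW2 : ∀ s : H, ((inner ℂ (W (W s)) s : ℂ)).re ≥ δ₁ * ‖s‖ ^ 2)
    (hanti : ∀ s : H, ‖D (W s) + W (D s)‖ ≤ η * ‖s‖) :
    (∀ s : H, ‖D s + W s‖ ^ 2 ≥ (δ₁ - η) * ‖s‖ ^ 2) ∧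
      (η < δ₁ → ∀ s : H, D s + W s = 0 → s = 0) := by
  have hWsym : (W : H →ₗ[ℂ] H).IsSymmetric := hW.isSymmetric
  have main : ∀ s : H, ‖D s + W s‖ ^ 2 ≥ (δ₁ - η) * ‖s‖ ^ 2 := by
    intro s
    have hexp : ‖D s + W s‖ ^ 2
        = ‖D s‖ ^ 2 + 2 * (inner ℂ (D s) (W s) : ℂ).re + ‖W s‖ ^ 2 := by
      have := @norm_add_sq ℂ H _ _ _ (D s) (W s)
      simpa using this
    -- ‖W s‖² ≥ δ₁ ‖s‖²
    have hWlow : ‖W s‖ ^ 2 ≥ δ₁ * ‖s‖ ^ 2 := by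
      have h1 : (inner ℂ (W (W s)) s : ℂ) = inner ℂ (W s) (W s) := hWsym (W s) s
      have h2 : ((inner ℂ (W s) (W s) : ℂ)).re = ‖W s‖ ^ 2 := by
        exact inner_self_eq_norm_sq (𝕜 := ℂ) (W s)
      have := hW2 s
      rw [h1, h2] at this
      exact this
    -- cross term
    have hcross : 2 * (inner ℂ (D s) (W s) : ℂ).re ≥ -(η * ‖s‖ ^ 2) := by
      have e1 : (inner ℂ (D s) (W s) : ℂ) = inner ℂ s (D (W s)) := hD s (W s)
      have e2 : (inner ℂ (W s) (D s) : ℂ) = inner ℂ s (W (D s)) := hWsym s (D s)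
      have hre : (inner ℂ (W s) (D s) : ℂ).re = (inner ℂ (D s) (W s) : ℂ).re := by
        rw [← inner_conj_symm (D s) (W s)]
        exact Complex.conj_re _
      have hsum : 2 * (inner ℂ (D s) (W s) : ℂ).re
          = (inner ℂ s (D (W s) + W (D s)) : ℂ).re := by
        rw [inner_add_right, Complex.add_re, ← e1, ← e2, hre]
        ring
      have hb : |(inner ℂ s (D (W s) + W (D s)) : ℂ).re|
          ≤ ‖s‖ * (η * ‖s‖) := by
        calc |(inner ℂ s (D (W s) + W (D s)) : ℂ).re|
            ≤ ‖(inner ℂ s (D (W s) + W (D s)) : ℂ)‖ := Complex.abs_re_le_norm _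
          _ ≤ ‖s‖ * ‖D (W s) + W (D s)‖ := norm_inner_le_norm _ _
          _ ≤ ‖s‖ * (η * ‖s‖) := by
              exact mul_le_mul_of_nonneg_left (hanti s) (norm_nonneg s)
      rw [hsum]
      nlinarith [abs_le.mp hb]
    nlinarith [sq_nonneg ‖D s‖]
  refine ⟨main, fun hlt s hs => ?_⟩
  have h := main s
  rw [hs] at h
  simp at h
  have h0 : ‖s‖ ^ 2 = 0 := le_antisymm (by nlinarith) (sq_nonneg _)
  have : ‖s‖ = 0 := by
    exact pow_eq_zero_iff (by norm_num : (2:ℕ) ≠ 0) |>.mp h0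
  exact norm_eq_zero.mp this
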